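/- Let M be a partial matching on [n] with |M| = m edges, and let K be a uniformly random subset of [n] of fixed size k. Then the probability that K contains no edge of M (i.e., no edge of M has both endpoints in K) is at most (1 - k(k-1)/(n(n-1)))^m. -/

import Mathlib

open scoped Classical

open Finset



lemma shadow_bound {α : Type*} [DecidableEq α] (G : Finset α) (P : Finset α → Prop)
    [DecidablePred P] (hP : ∀ ⦃S T : Finset α⦄, T ⊆ S → P S → P T) (s : ℕ) :
    (s + 1) * ((G.powersetCard (s + 1)).filter P).card
      ≤ (G.card - s) * ((G.powersetCard s).filter P).card := by
  classical
  set A := (G.powersetCard (s+1)).filter P with hA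
  set B := (G.powersetCard s).filter P with hB
  have key1 : ∀ S ∈ A, (B.filter (fun T => T ⊆ S)).card = s + 1 := by
    intro S hS
    rw [hA, mem_filter, mem_powersetCard] at hS
    have hEq : B.filter (fun T => T ⊆ S) = S.powersetCard s := by
      ext T
      simp only [hB, mem_filter, mem_powersetCard]
      constructor
      · rintro ⟨⟨⟨hTG, hTs⟩, hPT⟩, hTS⟩; exact ⟨hTS, hTs⟩
      · rintro ⟨hTS, hTs⟩
        exact ⟨⟨⟨hTS.trans hS.1.1, hTs⟩, hP hTS hS.2⟩, hTS⟩
    rw [hEq, card_powersetCard, hS.1.2]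
    exact Nat.choose_succ_self_right s
  have count1 : (s+1) * A.card = ∑ S ∈ A, (B.filter (fun T => T ⊆ S)).card := by
    rw [Finset.sum_congr rfl key1, Finset.sum_const, smul_eq_mul, mul_comm]
  have swap : ∑ S ∈ A, (B.filter (fun T => T ⊆ S)).card
      = ∑ T ∈ B, (A.filter (fun S => T ⊆ S)).card := by
    simp_rw [card_filter]
    exact Finset.sum_comm
  have bound : ∀ T ∈ B, (A.filter (fun S => T ⊆ S)).card ≤ G.card - s := by
    intro T hT
    rw [hB, mem_filter, mem_powersetCard] at hT
    obtain ⟨⟨hTG, hTs⟩, _⟩ := hT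
    have hinj : (A.filter (fun S => T ⊆ S)).card ≤ ((G \ T).powersetCard 1).card := by
      apply Finset.card_le_card_of_injOn (fun S => S \ T)
      · intro S hS
        rw [mem_coe, mem_filter] at hS
        obtain ⟨hSA, hTS⟩ := hS
        rw [hA, mem_filter, mem_powersetCard] at hSA
        rw [mem_coe, mem_powersetCard]
        refine ⟨sdiff_subset_sdiff hSA.1.1 Subset.rfl, ?_⟩
        rw [card_sdiff_of_subset hTS, hSA.1.2, hTs]
        omega
      · intro S1 h1 S2 h2 hEq
        simp only [mem_coe, mem_filter] at h1 h2
        have e1 : T ∪ S1 \ T = S1 := union_sdiff_of_subset h1.2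
        have e2 : T ∪ S2 \ T = S2 := union_sdiff_of_subset h2.2
        simp only [] at hEq
        rw [← e1, ← e2, hEq]
    rwa [card_powersetCard, Nat.choose_one_right, card_sdiff_of_subset hTG, hTs] at hinj
  calc (s+1) * A.card = ∑ T ∈ B, (A.filter fun S => T ⊆ S).card := by rw [count1, swap]
    _ ≤ ∑ _T ∈ B, (G.card - s) := Finset.sum_le_sum bound
    _ = (G.card - s) * B.card := by rw [Finset.sum_const, smul_eq_mul, mul_comm]

-- partition card lemma
lemma part_card {n k : ℕ} (u v : Fin n) (huv : u ≠ v)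
    (Q : Finset (Fin n) → Prop)
    (hQiff : ∀ K K' : Finset (Fin n),
      (∀ w : Fin n, w ≠ u → w ≠ v → (w ∈ K ↔ w ∈ K')) → (Q K ↔ Q K'))
    (s : Finset (Fin n)) (hs : s ⊆ {u, v}) (hsk : s.card ≤ k) :
    ((Finset.univ.powersetCard k).filter (fun K => Q K ∧ K ∩ {u, v} = s)).card
      = (((Finset.univ \ {u, v} : Finset (Fin n)).powersetCard (k - s.card)).filter Q).card := by
  set G : Finset (Fin n) := Finset.univ \ {u, v} with hG
  apply card_bij' (fun K _ => K \ {u, v}) (fun T _ => T ∪ s)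
  · -- forward maps into target
    intro K hK
    rw [mem_filter, mem_powersetCard] at hK
    obtain ⟨⟨hKu, hKcard⟩, hQK, hKs⟩ := hK
    rw [mem_filter, mem_powersetCard]
    refine ⟨⟨sdiff_subset_sdiff (subset_univ K) Subset.rfl, ?_⟩, ?_⟩
    · have h := Finset.card_sdiff_add_card_inter K ({u, v} : Finset (Fin n))
      rw [hKs, hKcard] at h
      omega
    · refine (hQiff K _ ?_).mp hQK
      intro w hwu hwv
      simp [mem_sdiff, hwu, hwv]
  · -- backward maps into source
    intro T hT
    rw [mem_filter, mem_powersetCard] at hT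
    obtain ⟨⟨hTG, hTcard⟩, hQT⟩ := hT
    have hdisjTs : Disjoint T s := by
      refine Finset.disjoint_left.mpr ?_
      intro x hxT hxs
      have := hTG hxT
      rw [hG, mem_sdiff] at this
      exact this.2 (hs hxs)
    rw [mem_filter, mem_powersetCard]
    refine ⟨⟨subset_univ _, ?_⟩, ?_, ?_⟩
    · rw [card_union_of_disjoint hdisjTs, hTcard]
      omega
    · refine (hQiff _ T ?_).mpr hQT
      intro w hwu hwv
      have hws : w ∉ s := by
        intro hws
        rcases mem_insert.mp (hs hws) with h | h
        · exact hwu h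
        · exact hwv (mem_singleton.mp h)
      simp [mem_union, hws]
    · ext x
      simp only [mem_inter, mem_union]
      constructor
      · rintro ⟨hx1 | hx2, hxuv⟩
        · exact absurd hxuv (by have := hTG hx1; rw [hG, mem_sdiff] at this; exact this.2)
        · exact hx2
      · intro hxs
        exact ⟨Or.inr hxs, hs hxs⟩
  · -- left inverse
    intro K hK
    rw [mem_filter] at hK
    obtain ⟨_, _, hKs⟩ := hK
    rw [← hKs]
    exact Finset.sdiff_union_inter K {u, v}
  · -- right inverse
    intro T hT
    rw [mem_filter, mem_powersetCard] at hT
    obtain ⟨⟨hTG, _⟩, _⟩ := hT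
    ext x
    simp only [mem_sdiff, mem_union]
    constructor
    · rintro ⟨hx1 | hx2, hxuv⟩
      · exact hx1
      · exact absurd (hs hx2) hxuv
    · intro hxT
      have := hTG hxT
      rw [hG, mem_sdiff] at this
      exact ⟨Or.inl hxT, this.2⟩

lemma triv_bound (n k : ℕ) (hk : k ≤ n) (P : Finset (Fin n) → Prop) [DecidablePred P] :
    ((((Finset.univ : Finset (Fin n)).powersetCard k).filter P).card : ℝ)
      / (n.choose k : ℝ) ≤ 1 := by
  have hC : (0:ℝ) < (n.choose k : ℝ) := by exact_mod_cast Nat.choose_pos hk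
  rw [div_le_one hC]
  have : (((Finset.univ : Finset (Fin n)).powersetCard k).filter P).card
      ≤ n.choose k := by
    refine (Finset.card_filter_le _ _).trans ?_
    rw [card_powersetCard, card_univ, Fintype.card_fin]
  exact_mod_cast this
set_option maxHeartbeats 1000000 in
lemma key_lemma (n k : ℕ) (hn : 2 ≤ n) (hk : k ≤ n) (hk2 : 2 ≤ k) :
    ∀ (m : ℕ) (M : Finset (Sym2 (Fin n))), M.card = m →
    (∀ e ∈ M, ¬ e.IsDiag) →
    (∀ e ∈ M, ∀ e' ∈ M, e ≠ e' → ∀ v : Fin n, v ∈ e → v ∉ e') →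
    ((((Finset.univ : Finset (Fin n)).powersetCard k).filter
        (fun K => ∀ e ∈ M, ¬ (∀ v ∈ e, v ∈ K))).card : ℝ)
      / (n.choose k : ℝ)
    ≤ (1 - (k : ℝ) * (k - 1) / ((n : ℝ) * (n - 1))) ^ m := by
  intro m
  induction m with
  | zero =>
    intro M hcard _ _
    rw [pow_zero]
    exact triv_bound n k hk _
  | succ m ih =>
    intro M hcard hdiag hdisj
    obtain ⟨e, he⟩ : M.Nonempty := card_pos.mp (by omega)
    revert he
    induction e using Sym2.ind with | _ u v => ?_
    intro he
    have huv : u ≠ v := by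
      have := hdiag _ he
      simpa [Sym2.mk_isDiag_iff] using this
    set M' := M.erase s(u, v) with hM'
    have hM'card : M'.card = m := by
      rw [hM', card_erase_of_mem he, hcard]
      omega
    have hM'sub : M' ⊆ M := erase_subset _ _
    have hfree : ∀ e' ∈ M', ∀ w : Fin n, w ∈ e' → w ≠ u ∧ w ≠ v := by
      intro e' he' w hw
      have hne : s(u, v) ≠ e' := (ne_of_mem_erase he').symm
      have hu : u ∉ e' := hdisj _ he _ (hM'sub he') hne u (Sym2.mem_mk_left u v)
      have hv : v ∉ e' := hdisj _ he _ (hM'sub he') hne v (Sym2.mem_mk_right u v)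
      exact ⟨fun h => hu (h ▸ hw), fun h => hv (h ▸ hw)⟩
    set G : Finset (Fin n) := Finset.univ \ {u, v} with hG
    have hcuv : ({u, v} : Finset (Fin n)).card = 2 := by
      rw [card_insert_of_notMem (by simpa using huv), card_singleton]
    have hGcard : G.card = n - 2 := by
      rw [hG, card_sdiff_of_subset (subset_univ _), card_univ, Fintype.card_fin, hcuv]
    set Q : Finset (Fin n) → Prop :=
      fun K => ∀ e' ∈ M', ¬ (∀ w ∈ e', w ∈ K) with hQ
    have hQiff : ∀ K K' : Finset (Fin n),
        (∀ w : Fin n, w ≠ u → w ≠ v → (w ∈ K ↔ w ∈ K')) → (Q K ↔ Q K') := by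
      intro K K' h
      have hmem : ∀ e' ∈ M', ((∀ w ∈ e', w ∈ K) ↔ (∀ w ∈ e', w ∈ K')) := by
        intro e' he'
        constructor <;> intro hall w hw
        · exact (h w (hfree e' he' w hw).1 (hfree e' he' w hw).2).mp (hall w hw)
        · exact (h w (hfree e' he' w hw).1 (hfree e' he' w hw).2).mpr (hall w hw)
      constructor <;> intro hq e' he' hall
      · exact hq e' he' ((hmem e' he').mpr hall)
      · exact hq e' he' ((hmem e' he').mp hall)
    have hQmono : ∀ ⦃S T : Finset (Fin n)⦄, T ⊆ S → Q S → Q T := by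
      intro S T hTS hQS e' he' hall
      exact hQS e' he' (fun w hw => hTS (hall w hw))
    set X := (Finset.univ : Finset (Fin n)).powersetCard k with hX
    set A0 := ((G.powersetCard k).filter Q).card with hA0
    set A1 := ((G.powersetCard (k-1)).filter Q).card with hA1
    set A2 := ((G.powersetCard (k-2)).filter Q).card with hA2
    -- part cards
    have hp11 : ((X.filter (fun K => Q K ∧ K ∩ {u, v} = {u, v})).card) = A2 := by
      have hpc := part_card (k := k) u v huv Q hQiff {u, v} Subset.rfl (hcuv ▸ hk2)
      rw [hcuv] at hpc
      rw [hA2, hX, hG]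
      convert hpc using 2 <;> congr!
    have hp10 : ((X.filter (fun K => Q K ∧ K ∩ {u, v} = {u})).card) = A1 := by
      have hpc := part_card (k := k) u v huv Q hQiff {u} (by simp) (by rw [card_singleton]; omega)
      rw [card_singleton] at hpc
      rw [hA1, hX, hG]
      convert hpc using 2 <;> congr!
    have hp01 : ((X.filter (fun K => Q K ∧ K ∩ {u, v} = {v})).card) = A1 := by
      have hpc := part_card (k := k) u v huv Q hQiff {v} (by simp [Finset.singleton_subset_iff])
        (by rw [card_singleton]; omega)
      rw [card_singleton] at hpc
      rw [hA1, hX, hG]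
      convert hpc using 2 <;> congr!
    have hp00 : ((X.filter (fun K => Q K ∧ K ∩ {u, v} = ∅)).card) = A0 := by
      have hpc := part_card (k := k) u v huv Q hQiff ∅ (empty_subset _) (by simp)
      rw [card_empty] at hpc
      rw [Nat.sub_zero] at hpc
      rw [hA0, hX, hG]
      convert hpc using 2 <;> congr!
    -- split the Q-filtered family by intersection with {u,v}
    set R := X.filter Q with hR
    have hinter : ∀ K : Finset (Fin n), K ∩ {u, v} = {u, v} ↔ (u ∈ K ∧ v ∈ K) := by
      intro K
      constructor
      · intro h
        constructor
        · have : u ∈ K ∩ {u, v} := by rw [h]; simp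
          exact (mem_inter.mp this).1
        · have : v ∈ K ∩ {u, v} := by rw [h]; simp
          exact (mem_inter.mp this).1
      · rintro ⟨hu, hv⟩
        ext x
        simp only [mem_inter, mem_insert, mem_singleton]
        constructor
        · rintro ⟨_, h⟩; exact h
        · rintro (rfl | rfl)
          · exact ⟨hu, by simp⟩
          · exact ⟨hv, by simp⟩
    have hinter10 : ∀ K : Finset (Fin n), K ∩ {u, v} = {u} ↔ (u ∈ K ∧ v ∉ K) := by
      intro K
      constructor
      · intro h
        constructor
        · have : u ∈ K ∩ {u, v} := by rw [h]; simp
          exact (mem_inter.mp this).1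
        · intro hv
          have : v ∈ K ∩ {u, v} := mem_inter.mpr ⟨hv, by simp⟩
          rw [h, mem_singleton] at this
          exact huv this.symm
      · rintro ⟨hu, hv⟩
        ext x
        simp only [mem_inter, mem_insert, mem_singleton]
        constructor
        · rintro ⟨hxK, (rfl | rfl)⟩
          · rfl
          · exact absurd hxK hv
        · rintro rfl
          exact ⟨hu, Or.inl rfl⟩
    have hinter01 : ∀ K : Finset (Fin n), K ∩ {u, v} = {v} ↔ (u ∉ K ∧ v ∈ K) := by
      intro K
      constructor
      · intro h
        constructor
        · intro hu
          have : u ∈ K ∩ {u, v} := mem_inter.mpr ⟨hu, by simp⟩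
          rw [h, mem_singleton] at this
          exact huv this
        · have : v ∈ K ∩ {u, v} := by rw [h]; simp
          exact (mem_inter.mp this).1
      · rintro ⟨hu, hv⟩
        ext x
        simp only [mem_inter, mem_insert, mem_singleton]
        constructor
        · rintro ⟨hxK, (rfl | rfl)⟩
          · exact absurd hxK hu
          · rfl
        · rintro rfl
          exact ⟨hv, Or.inr rfl⟩
    have hinter00 : ∀ K : Finset (Fin n), K ∩ {u, v} = ∅ ↔ (u ∉ K ∧ v ∉ K) := by
      intro K
      constructor
      · intro h
        constructor
        · intro hu
          have : u ∈ K ∩ {u, v} := mem_inter.mpr ⟨hu, by simp⟩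
          rw [h] at this
          exact absurd this (notMem_empty _)
        · intro hv
          have : v ∈ K ∩ {u, v} := mem_inter.mpr ⟨hv, by simp⟩
          rw [h] at this
          exact absurd this (notMem_empty _)
      · rintro ⟨hu, hv⟩
        ext x
        simp only [mem_inter, mem_insert, mem_singleton, notMem_empty, iff_false, not_and]
        rintro hxK (rfl | rfl)
        · exact hu hxK
        · exact hv hxK
    -- R splits into four parts
    have hsplitR : R.card = A2 + A1 + A1 + A0 := by
      have h1 := Finset.card_filter_add_card_filter_not
        (s := R) (p := fun K => u ∈ K)
      have h2 := Finset.card_filter_add_card_filter_not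
        (s := R.filter (fun K => u ∈ K)) (p := fun K => v ∈ K)
      have h3 := Finset.card_filter_add_card_filter_not
        (s := R.filter (fun K => ¬ u ∈ K)) (p := fun K => v ∈ K)
      have e11 : (R.filter (fun K => u ∈ K)).filter (fun K => v ∈ K)
          = X.filter (fun K => Q K ∧ K ∩ {u, v} = {u, v}) := by
        rw [hR, filter_filter, filter_filter]
        apply filter_congr
        intro K _
        rw [hinter K]
        try tauto
      have e10 : (R.filter (fun K => u ∈ K)).filter (fun K => ¬ v ∈ K)
          = X.filter (fun K => Q K ∧ K ∩ {u, v} = {u}) := by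
        rw [hR, filter_filter, filter_filter]
        apply filter_congr
        intro K _
        rw [hinter10 K]
        try tauto
      have e01 : (R.filter (fun K => ¬ u ∈ K)).filter (fun K => v ∈ K)
          = X.filter (fun K => Q K ∧ K ∩ {u, v} = {v}) := by
        rw [hR, filter_filter, filter_filter]
        apply filter_congr
        intro K _
        rw [hinter01 K]
        try tauto
      have e00 : (R.filter (fun K => ¬ u ∈ K)).filter (fun K => ¬ v ∈ K)
          = X.filter (fun K => Q K ∧ K ∩ {u, v} = ∅) := by
        rw [hR, filter_filter, filter_filter]
        apply filter_congr
        intro K _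
        rw [hinter00 K]
        try tauto
      rw [e11, hp11] at h2
      rw [e10, hp10] at h2
      rw [e01, hp01] at h3
      rw [e00, hp00] at h3
      omega
    -- the M-avoiding family
    have hMeq : X.filter (fun K => ∀ e ∈ M, ¬ (∀ w ∈ e, w ∈ K))
        = R.filter (fun K => ¬ (u ∈ K ∧ v ∈ K)) := by
      rw [hR, filter_filter]
      apply filter_congr
      intro K _
      have hMins : M = insert s(u, v) M' := by rw [hM', insert_erase he]
      rw [hMins]
      rw [forall_mem_insert]
      constructor
      · rintro ⟨h1, h2⟩
        refine ⟨h2, fun h => h1 ?_⟩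
        intro w hw
        rcases Sym2.mem_iff.mp hw with rfl | rfl
        · exact h.1
        · exact h.2
      · rintro ⟨h2, h1⟩
        refine ⟨fun h => h1 ⟨h u (Sym2.mem_mk_left u v), h v (Sym2.mem_mk_right u v)⟩, h2⟩
    have hMcard : (X.filter (fun K => ∀ e ∈ M, ¬ (∀ w ∈ e, w ∈ K))).card + A2 = R.card := by
      rw [hMeq]
      have h1 := Finset.card_filter_add_card_filter_not
        (s := R) (p := fun K => ¬ (u ∈ K ∧ v ∈ K))
      have e11 : R.filter (fun K => ¬ ¬ (u ∈ K ∧ v ∈ K))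
          = X.filter (fun K => Q K ∧ K ∩ {u, v} = {u, v}) := by
        rw [hR, filter_filter]
        apply filter_congr
        intro K _
        rw [hinter K]
        try tauto
      rw [e11, hp11] at h1
      exact h1
    -- shadow bounds
    have hsh1 : k * A0 ≤ (n - k - 1) * A1 := by
      have := shadow_bound G Q hQmono (k - 1)
      rw [hGcard] at this
      have hk1 : k - 1 + 1 = k := by omega
      rw [hk1] at this
      have hco : n - 2 - (k - 1) = n - k - 1 := by omega
      rw [hco] at this
      exact this
    have hsh2 : (k - 1) * A1 ≤ (n - k) * A2 := by
      have := shadow_bound G Q hQmono (k - 2)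
      rw [hGcard] at this
      have hk1 : k - 2 + 1 = k - 1 := by omega
      rw [hk1] at this
      have hco : n - 2 - (k - 2) = n - k := by omega
      rw [hco] at this
      exact this
    -- the combined combinatorial inequality
    have hcomb : k * (k - 1) * (A0 + 2 * A1 + A2) ≤ n * (n - 1) * A2 := by
      rcases eq_or_lt_of_le hk with rfl | hkn
      · -- k = n : A0 = A1 = 0
        have hA0z : A0 = 0 := by
          rw [hA0]
          have : G.powersetCard k = ∅ :=
            Finset.powersetCard_eq_empty.mpr (by omega)
          rw [this, filter_empty, card_empty]
        have hA1z : A1 = 0 := by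
          rw [hA1]
          have : G.powersetCard (k - 1) = ∅ :=
            Finset.powersetCard_eq_empty.mpr (by omega)
          rw [this, filter_empty, card_empty]
        rw [hA0z, hA1z]
        have : k * (k - 1) ≤ k * (k - 1) := le_rfl
        nlinarith [Nat.sub_le k 1]
      · obtain ⟨d, hd⟩ : ∃ d, n = k + d + 1 := ⟨n - k - 1, by omega⟩
        obtain ⟨e, he'⟩ : ∃ e, k = e + 2 := ⟨k - 2, by omega⟩
        subst hd he'
        have c1 : e + 2 + d + 1 - (e + 2) - 1 = d := by omega
        have c2 : e + 2 + d + 1 - (e + 2) = d + 1 := by omega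
        have c3 : e + 2 - 1 = e + 1 := by omega
        have c4 : e + 2 + d + 1 - 1 = e + d + 2 := by omega
        rw [c1] at hsh1
        rw [c2, c3] at hsh2
        rw [c3, c4]
        nlinarith [Nat.mul_le_mul_left (e+1) hsh1, Nat.mul_le_mul_left d hsh2,
          Nat.mul_le_mul_left (2*(e+2)) hsh2, Nat.mul_le_mul_left (e+2) hsh2]
    -- now pass to the reals
    have hC : (0:ℝ) < (n.choose k : ℝ) := by exact_mod_cast Nat.choose_pos hk
    have hnn : (0:ℝ) < (n:ℝ) * ((n:ℝ) - 1) := by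
      have : (2:ℝ) ≤ (n:ℝ) := by exact_mod_cast hn
      nlinarith
    set p : ℝ := (k : ℝ) * ((k:ℝ) - 1) / ((n : ℝ) * ((n:ℝ) - 1)) with hp
    have hp0 : 0 ≤ p := by
      apply div_nonneg _ hnn.le
      have : (2:ℝ) ≤ (k:ℝ) := by exact_mod_cast hk2
      nlinarith
    have hp1 : p ≤ 1 := by
      rw [hp, div_le_one hnn]
      have h1 : (k:ℝ) ≤ (n:ℝ) := by exact_mod_cast hk
      have h2 : (2:ℝ) ≤ (k:ℝ) := by exact_mod_cast hk2
      nlinarith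
    set cntM : ℕ := (X.filter (fun K => ∀ e ∈ M, ¬ (∀ w ∈ e, w ∈ K))).card with hcnt
    have hIH := ih M' hM'card (fun e he => hdiag e (hM'sub he))
      (fun e he e' he' hne w hw => hdisj e (hM'sub he) e' (hM'sub he') hne w hw)
    -- R.card is the count for M'
    have hReq : R.card = (X.filter (fun K => ∀ e ∈ M', ¬ (∀ w ∈ e, w ∈ K))).card := rfl
    have hstep : (cntM : ℝ) ≤ (1 - p) * (R.card : ℝ) := by
      have hsum : (cntM : ℝ) + (A2 : ℝ) = (R.card : ℝ) := by exact_mod_cast hMcard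
      have hpA : p * (R.card : ℝ) ≤ (A2 : ℝ) := by
        rw [hp, div_mul_eq_mul_div, div_le_iff₀ hnn]
        have hcast : ((k * (k - 1) * (A0 + 2 * A1 + A2) : ℕ) : ℝ)
            ≤ ((n * (n - 1) * A2 : ℕ) : ℝ) := by exact_mod_cast hcomb
        push_cast [Nat.cast_sub (by omega : 1 ≤ k), Nat.cast_sub (by omega : 1 ≤ n)] at hcast
        have hRcast : (R.card : ℝ) = (A2 : ℝ) + (A1:ℝ) + (A1:ℝ) + (A0:ℝ) := by
          exact_mod_cast congrArg (Nat.cast : ℕ → ℝ) hsplitR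
        rw [hRcast]
        nlinarith
      nlinarith
    rw [pow_succ']
    calc (cntM : ℝ) / (n.choose k : ℝ)
        ≤ ((1 - p) * (R.card : ℝ)) / (n.choose k : ℝ) := by
          gcongr
      _ = (1 - p) * ((R.card : ℝ) / (n.choose k : ℝ)) := by ring
      _ ≤ (1 - p) * (1 - p) ^ m := by
          apply mul_le_mul_of_nonneg_left _ (by linarith)
          rw [hReq]
          exact hIH



/-- A uniformly random `k`-element subset `K` of `[n]` contains no edge of a
partial matching `M` of size `m` with probability at most
`(1 - k(k-1)/(n(n-1)))^m`. -/
theorem stmt_0 (n k m : ℕ) (hn : 2 ≤ n) (hk : k ≤ n)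
    (M : Finset (Sym2 (Fin n)))
    (hcard : M.card = m)
    (hdiag : ∀ e ∈ M, ¬ e.IsDiag)
    (hdisj : ∀ e ∈ M, ∀ e' ∈ M, e ≠ e' → ∀ v : Fin n, v ∈ e → v ∉ e') :
    ((((Finset.univ : Finset (Fin n)).powersetCard k).filter
        (fun K => ∀ e ∈ M, ¬ (∀ v ∈ e, v ∈ K))).card : ℝ)
      / (n.choose k : ℝ)
    ≤ (1 - (k : ℝ) * (k - 1) / ((n : ℝ) * (n - 1))) ^ m := by

  by_cases hk2 : 2 ≤ k
  · exact key_lemma n k hn hk hk2 m M hcard hdiag hdisj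
  · have hkk : (k : ℝ) * ((k : ℝ) - 1) = 0 := by
      interval_cases k
      · norm_num
      · norm_num
    rw [hkk]
    simp only [zero_div, sub_zero, one_pow]
    exact triv_bound n k hk _
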